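/- Assume f̲_0 = f̄_0 = 0, f̄_j = 1 for all j ∈ {1,…,n}, and 0 ≤ d < 1. Let c^x, c^f ∈ ℝ^n with c^x_i ≥ 0 for all i, and define z = min_{i∈{1,…,n}} (c^x_i + c^f_i) + min_{j∈{1,…,n}} (c^x_j − c^f_j). If z > 0, then no point (x,f) ∈ S that has two distinct indices i, j ∈ {1,…,n} with f_i = 1 and f_j = −1 can minimize the linear function (x,f) ↦ ∑_{i=1}^n (c^x_i x_i + c^f_i f_i) over S; i.e., for any such (x,f) there exists (x*,f*) ∈ S with strictly smaller objective value. -/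
import Mathlib


open scoped BigOperators

/-- Claim 1: if `z > 0`, no point of `S` with a `+1` flow and a
`-1` flow on two distinct lines can be optimal. -/
theorem no_opposite_unit_flows_optimal (n : ℕ) (hn : 1 ≤ n)
    (d : ℝ) (hd0 : 0 ≤ d) (hd : d < 1)
    (S : Set ((Fin n → ℝ) × (Fin (n + 1) → ℝ)))
    (hS : S = {p | (∀ j, p.1 j = 0 ∨ p.1 j = 1) ∧
      (∑ j, p.2 j) = d ∧ p.2 0 = 0 ∧
      ∀ j : Fin n, -(p.1 j) ≤ p.2 j.succ ∧ p.2 j.succ ≤ p.1 j})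
    (cx cf : Fin n → ℝ) (hcx : ∀ i, 0 ≤ cx i)
    -- `i0` attains `min (cˣ + c^f)` and `j0` attains `min (cˣ - c^f)`
    (i0 j0 : Fin n)
    (hi0 : ∀ k, cx i0 + cf i0 ≤ cx k + cf k)
    (hj0 : ∀ k, cx j0 - cf j0 ≤ cx k - cf k)
    (z : ℝ) (hz : z = (cx i0 + cf i0) + (cx j0 - cf j0)) (hzpos : 0 < z) :
    ∀ p ∈ S, ∀ i j : Fin n, i ≠ j → p.2 i.succ = 1 → p.2 j.succ = -1 →
      ∃ q ∈ S, (∑ k, (cx k * q.1 k + cf k * q.2 k.succ)) <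
        (∑ k, (cx k * p.1 k + cf k * p.2 k.succ)) := by
  intro p hp i j hij hfi hfj
  subst hS
  obtain ⟨hx01, hsum, hf0, hbd⟩ := hp
  -- x_i = 1 and x_j = 1
  have hxi : p.1 i = 1 := by
    rcases hx01 i with h | h
    · exfalso; have := (hbd i).2; rw [hfi, h] at this; linarith
    · exact h
  have hxj : p.1 j = 1 := by
    rcases hx01 j with h | h
    · exfalso; have := (hbd j).1; rw [hfj, h] at this; simp at this; linarith
    · exact h
  -- the new point q
  set q : (Fin n → ℝ) × (Fin (n + 1) → ℝ) :=
    (fun k => if k = i ∨ k = j then 0 else p.1 k,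
     fun k => if k = i.succ ∨ k = j.succ then 0 else p.2 k) with hq
  have hsij : (i.succ : Fin (n+1)) ≠ j.succ := fun h => hij (Fin.succ_injective n h)
  refine ⟨q, ?_, ?_⟩
  · refine ⟨?_, ?_, ?_, ?_⟩
    · intro k
      by_cases h : k = i ∨ k = j
      · left; simp [hq, h]
      · simp only [hq, if_neg h]; exact hx01 k
    · -- sum of flows unchanged
      have hsupp : ∀ k ∈ Finset.univ \ ({i.succ, j.succ} : Finset (Fin (n+1))),
          p.2 k - q.2 k = 0 := by
        intro k hk
        simp only [Finset.mem_sdiff, Finset.mem_insert, Finset.mem_singleton] at hk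
        have h : ¬ (k = i.succ ∨ k = j.succ) := by tauto
        simp [hq, h]
      have h1 : ∑ k, (p.2 k - q.2 k) = ∑ k ∈ ({i.succ, j.succ} : Finset (Fin (n+1))),
          (p.2 k - q.2 k) :=
        (Finset.sum_subset (Finset.subset_univ _) (fun k _ hk => hsupp k (by
          simp only [Finset.mem_sdiff]; exact ⟨Finset.mem_univ k, hk⟩))).symm
      rw [Finset.sum_pair hsij] at h1
      have hqi : q.2 i.succ = 0 := by simp [hq]
      have hqj : q.2 j.succ = 0 := by simp [hq]
      have h2 : ∑ k, (p.2 k - q.2 k) = 0 := by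
        rw [h1, hqi, hqj, hfi, hfj]; ring
      rw [Finset.sum_sub_distrib, hsum] at h2
      linarith
    · have : ¬((0 : Fin (n+1)) = i.succ ∨ (0 : Fin (n+1)) = j.succ) := by
        push_neg
        exact ⟨fun h => (Fin.succ_ne_zero i) h.symm, fun h => (Fin.succ_ne_zero j) h.symm⟩
      simp [hq, this, hf0]
    · intro k
      by_cases h : k = i ∨ k = j
      · have hs : k.succ = i.succ ∨ k.succ = j.succ := by
          rcases h with h | h <;> [left; right] <;> rw [h]
        simp [hq, h, hs]
      · have hs : ¬(k.succ = i.succ ∨ k.succ = j.succ) := by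
          intro hc
          exact h (hc.imp (fun e => Fin.succ_injective n e) (fun e => Fin.succ_injective n e))
        simp only [hq, if_neg h, if_neg hs]
        exact hbd k
  · -- objective strictly decreases
    set g : Fin n → ℝ := fun k =>
      (cx k * p.1 k + cf k * p.2 k.succ) - (cx k * q.1 k + cf k * q.2 k.succ) with hg
    have hsupp : ∀ k, ¬(k = i ∨ k = j) → g k = 0 := by
      intro k h
      have hs : ¬(k.succ = i.succ ∨ k.succ = j.succ) := by
        intro hc
        exact h (hc.imp (fun e => Fin.succ_injective n e) (fun e => Fin.succ_injective n e))
      simp [hg, hq, h, hs]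
    have h1 : ∑ k, g k = ∑ k ∈ ({i, j} : Finset (Fin n)), g k :=
      (Finset.sum_subset (Finset.subset_univ _) (fun k _ hk => hsupp k (by
        simpa [Finset.mem_insert, Finset.mem_singleton] using hk))).symm
    have hgi : g i = cx i + cf i := by
      have hs : (i.succ = i.succ ∨ i.succ = j.succ) := Or.inl rfl
      simp [hg, hq, hs, hxi, hfi]
    have hgj : g j = cx j - cf j := by
      have hs : (j.succ = i.succ ∨ j.succ = j.succ) := Or.inr rfl
      simp [hg, hq, hs, hxj, hfj]
      ring
    have h2 : ∑ k, g k = (cx i + cf i) + (cx j - cf j) := by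
      rw [h1, Finset.sum_pair hij, hgi, hgj]
    have hge : z ≤ ∑ k, g k := by
      rw [h2, hz]
      have := hi0 i
      have := hj0 j
      linarith
    have h3 : ∑ k, g k = (∑ k, (cx k * p.1 k + cf k * p.2 k.succ))
        - (∑ k, (cx k * q.1 k + cf k * q.2 k.succ)) := by
      rw [hg, Finset.sum_sub_distrib]
    linarith
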